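/- (Finite U when d = p) If Re(R(Ψ)) = {Re(Ψ w) : w ∈ ℂ^{p'}} is all of ℝ^p and there exists x̄ ∈ C with Ψ^H x̄ = 0, then U is finite; i.e., there exists u ≥ 0 with X_u ∩ Q ≠ ∅. -/

import Mathlib

open Matrix
open scoped RealInnerProductSpace ENNReal

noncomputable section

def cnorm1 {n : ℕ} (z : Fin n → ℂ) : ℝ := ∑ j, ‖z j‖

noncomputable def cnormInf {n : ℕ} (z : Fin n → ℂ) : ℝ := ⨆ j, ‖z j‖

def psiH {p p' : ℕ} (Ψ : Matrix (Fin p) (Fin p') ℂ) (x : EuclideanSpace ℝ (Fin p)) :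
    Fin p' → ℂ :=
  Matrix.mulVec Ψᴴ fun i => (x i : ℂ)

def rePsi {p p' : ℕ} (Ψ : Matrix (Fin p) (Fin p') ℂ) (w : Fin p' → ℂ) :
    EuclideanSpace ℝ (Fin p) :=
  WithLp.toLp 2 fun i => (Matrix.mulVec Ψ w i).re

def Gset {n : ℕ} (s : Fin n → ℂ) : Set (Fin n → ℂ) :=
  {w | ∀ j, ‖w j‖ ≤ 1 ∧ (s j ≠ 0 → w j = s j / ((‖s j‖ : ℝ) : ℂ))}

def normalCone {p : ℕ} (C : Set (EuclideanSpace ℝ (Fin p))) (x : EuclideanSpace ℝ (Fin p)) :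
    Set (EuclideanSpace ℝ (Fin p)) :=
  {a | ∀ y ∈ C, ⟪a, y - x⟫ ≤ 0}

def XuSet {p p' : ℕ} (C : Set (EuclideanSpace ℝ (Fin p))) (L : EuclideanSpace ℝ (Fin p) → ℝ)
    (Ψ : Matrix (Fin p) (Fin p') ℂ) (u : ℝ) : Set (EuclideanSpace ℝ (Fin p)) :=
  {x ∈ C | ∀ χ ∈ C, L x + u * cnorm1 (psiH Ψ x) ≤ L χ + u * cnorm1 (psiH Ψ χ)}

def QSet {p p' : ℕ} (C : Set (EuclideanSpace ℝ (Fin p))) (Ψ : Matrix (Fin p) (Fin p') ℂ) :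
    Set (EuclideanSpace ℝ (Fin p)) :=
  {x ∈ C | ∀ χ ∈ C, cnorm1 (psiH Ψ x) ≤ cnorm1 (psiH Ψ χ)}

def XdSet {p p' : ℕ} (C : Set (EuclideanSpace ℝ (Fin p))) (L : EuclideanSpace ℝ (Fin p) → ℝ)
    (Ψ : Matrix (Fin p) (Fin p') ℂ) : Set (EuclideanSpace ℝ (Fin p)) :=
  {x ∈ QSet C Ψ | ∀ χ ∈ QSet C Ψ, L x ≤ L χ}

def Ubound {p p' : ℕ} (C : Set (EuclideanSpace ℝ (Fin p))) (L : EuclideanSpace ℝ (Fin p) → ℝ)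
    (Ψ : Matrix (Fin p) (Fin p') ℂ) : ℝ≥0∞ :=
  sInf (ENNReal.ofReal '' {u : ℝ | 0 ≤ u ∧ (XuSet C L Ψ u ∩ QSet C Ψ).Nonempty})


lemma psiH_zero' {p p' : ℕ} (Ψ : Matrix (Fin p) (Fin p') ℂ) : psiH Ψ 0 = 0 := by
  funext j
  simp [psiH, Matrix.mulVec, dotProduct]

lemma psiH_smul' {p p' : ℕ} (Ψ : Matrix (Fin p) (Fin p') ℂ) (t : ℝ)
    (x : EuclideanSpace ℝ (Fin p)) : psiH Ψ (t • x) = (t : ℂ) • psiH Ψ x := by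
  funext j
  simp [psiH, Matrix.mulVec, dotProduct, Finset.mul_sum]
  congr 1; funext i
  ring

lemma cnorm1_nonneg' {n : ℕ} (z : Fin n → ℂ) : 0 ≤ cnorm1 z :=
  Finset.sum_nonneg fun j _ => (norm_nonneg _)

lemma cnorm1_smul' {n : ℕ} (t : ℝ) (z : Fin n → ℂ) :
    cnorm1 ((t : ℂ) • z) = |t| * cnorm1 z := by
  simp [cnorm1, Finset.mul_sum, norm_mul, Complex.norm_real, Real.norm_eq_abs]

lemma cnorm1_eq_zero' {n : ℕ} {z : Fin n → ℂ} (h : cnorm1 z = 0) : z = 0 := by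
  funext j
  have := (Finset.sum_eq_zero_iff_of_nonneg (fun j _ => norm_nonneg (z j))).mp h j
    (Finset.mem_univ j)
  simpa using this

lemma psiH_inj' {p p' : ℕ} (Ψ : Matrix (Fin p) (Fin p') ℂ)
    (hsurj : ∀ v : EuclideanSpace ℝ (Fin p), ∃ w : Fin p' → ℂ, rePsi Ψ w = v)
    (x : EuclideanSpace ℝ (Fin p)) (hx : psiH Ψ x = 0) : x = 0 := by
  obtain ⟨w, hw⟩ := hsurj x
  have key : ∑ i, (x i : ℂ) * Matrix.mulVec Ψ w i
      = ∑ j, (starRingEnd ℂ) (psiH Ψ x j) * w j := by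
    simp only [psiH, Matrix.mulVec, dotProduct, Matrix.conjTranspose_apply,
      map_sum, Finset.mul_sum, Finset.sum_mul]
    rw [Finset.sum_comm]
    congr 1; funext i; congr 1; funext j
    simp [StarMul.star_mul, star_star, Complex.star_def, Complex.conj_ofReal]
    ring
  rw [hx] at key
  simp only [Pi.zero_apply, map_zero, zero_mul, Finset.sum_const_zero] at key
  have hre : ∑ i, x i * x i = 0 := by
    have := congrArg Complex.re key
    simpa [Complex.re_sum, Complex.mul_re, ← hw, rePsi] using this
  have hz : ∀ i, x i = 0 := by
    intro i
    have h2 : ∀ i ∈ Finset.univ, (0:ℝ) ≤ x i * x i := fun i _ => mul_self_nonneg _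
    have := (Finset.sum_eq_zero_iff_of_nonneg h2).mp hre i (Finset.mem_univ i)
    exact mul_self_eq_zero.mp this
  ext i; simpa using hz i

lemma psiH_cont' {p p' : ℕ} (Ψ : Matrix (Fin p) (Fin p') ℂ) :
    Continuous fun x : EuclideanSpace ℝ (Fin p) => cnorm1 (psiH Ψ x) := by
  unfold cnorm1 psiH Matrix.mulVec dotProduct
  apply continuous_finset_sum
  intro j _
  apply continuous_norm.comp
  apply continuous_finset_sum
  intro i _
  exact continuous_const.mul (Complex.continuous_ofReal.comp (EuclideanSpace.proj i).continuous)

lemma grad_ineq' {p : ℕ} (L : EuclideanSpace ℝ (Fin p) → ℝ) (hLcv : ConvexOn ℝ Set.univ L)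
    (hLd : Differentiable ℝ L) (χ : EuclideanSpace ℝ (Fin p)) :
    fderiv ℝ L 0 χ ≤ L χ - L 0 := by
  set g := fderiv ℝ L 0
  have h1 : HasDerivAt (fun t : ℝ => t • χ) χ 0 := by
    simpa using (hasDerivAt_id (0:ℝ)).smul_const χ
  have h2 : HasDerivAt (fun t : ℝ => L (t • χ)) (g χ) 0 := by
    have := (hLd ((0:ℝ) • χ)).hasFDerivAt.comp_hasDerivAt 0 h1
    simp only [zero_smul] at this; exact this
  have h3 := hasDerivAt_iff_tendsto_slope.mp h2
  have h4 : Filter.Tendsto (slope (fun t : ℝ => L (t • χ)) 0) (nhdsWithin 0 (Set.Ioi 0))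
      (nhds (g χ)) :=
    h3.mono_left (nhdsWithin_mono 0 (fun t ht => ne_of_gt ht))
  refine le_of_tendsto h4 ?_
  filter_upwards [Ioc_mem_nhdsGT_of_mem (by norm_num : (0:ℝ) ∈ Set.Ico (0:ℝ) 1)] with t ht
  obtain ⟨ht0, ht1⟩ := ht
  have hconv := hLcv.2 (Set.mem_univ χ) (Set.mem_univ (0 : EuclideanSpace ℝ (Fin p)))
    (le_of_lt ht0) (by linarith : (0:ℝ) ≤ 1 - t) (by ring)
  simp only [smul_zero, add_zero] at hconv
  rw [slope_def_field]
  simp only [zero_smul, sub_zero, smul_eq_mul] at *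
  rw [div_le_iff₀ ht0]
  nlinarith


theorem statement_9 {p p' : ℕ} (hp : 0 < p) (hp' : 0 < p')
    (C : Set (EuclideanSpace ℝ (Fin p))) (hCne : C.Nonempty) (hCcl : IsClosed C)
    (hCcv : Convex ℝ C)
    (L : EuclideanSpace ℝ (Fin p) → ℝ) (hLcv : ConvexOn ℝ Set.univ L)
    (hLd : Differentiable ℝ L) (hLb : BddBelow (L '' C))
    (Ψ : Matrix (Fin p) (Fin p') ℂ)
    (hsurj : ∀ v : EuclideanSpace ℝ (Fin p), ∃ w : Fin p' → ℂ, rePsi Ψ w = v)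
    (hbar : ∃ x ∈ C, psiH Ψ x = 0) :
    ∃ u : ℝ, 0 ≤ u ∧ (XuSet C L Ψ u ∩ QSet C Ψ).Nonempty := by
  -- 0 ∈ C
  obtain ⟨xb, hxbC, hxb0⟩ := hbar
  have hxb : xb = 0 := psiH_inj' Ψ hsurj xb hxb0
  have h0C : (0 : EuclideanSpace ℝ (Fin p)) ∈ C := hxb ▸ hxbC
  set f : EuclideanSpace ℝ (Fin p) → ℝ := fun x => cnorm1 (psiH Ψ x) with hf
  have hf0 : cnorm1 (psiH Ψ (0 : EuclideanSpace ℝ (Fin p))) = 0 := by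
    simp [psiH_zero', cnorm1]
  -- minimum of f on the unit sphere
  have hsne : (Metric.sphere (0 : EuclideanSpace ℝ (Fin p)) 1).Nonempty := by
    refine ⟨EuclideanSpace.single ⟨0, hp⟩ 1, ?_⟩
    simp [EuclideanSpace.norm_single]
  obtain ⟨x₀, hx₀s, hx₀min'⟩ :=
    (isCompact_sphere (0 : EuclideanSpace ℝ (Fin p)) 1).exists_isMinOn hsne
      (psiH_cont' Ψ).continuousOn
  have hx₀min : ∀ y ∈ Metric.sphere (0 : EuclideanSpace ℝ (Fin p)) 1,
      cnorm1 (psiH Ψ x₀) ≤ cnorm1 (psiH Ψ y) := fun y hy => hx₀min' hy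
  set c : ℝ := f x₀ with hc
  have hx₀n : ‖x₀‖ = 1 := by simpa using hx₀s
  have hcpos : 0 < c := by
    rcases lt_or_eq_of_le (cnorm1_nonneg' (psiH Ψ x₀)) with h | h
    · exact h
    · exfalso
      have : x₀ = 0 := psiH_inj' Ψ hsurj x₀ (cnorm1_eq_zero' h.symm)
      rw [this] at hx₀n; simp at hx₀n
  have hlow : ∀ χ : EuclideanSpace ℝ (Fin p), c * ‖χ‖ ≤ f χ := by
    intro χ
    rcases eq_or_ne χ 0 with h | h
    · simp only [h, norm_zero, mul_zero]
      exact cnorm1_nonneg' _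
    · have hn : (0:ℝ) < ‖χ‖ := norm_pos_iff.mpr h
      have hmem : ‖χ‖⁻¹ • χ ∈ Metric.sphere (0 : EuclideanSpace ℝ (Fin p)) 1 := by
        simp [norm_smul, abs_of_pos (inv_pos.mpr hn), inv_mul_cancel₀ (ne_of_gt hn)]
      have h2 : f (‖χ‖⁻¹ • χ) = ‖χ‖⁻¹ * f χ := by
        show cnorm1 (psiH Ψ (‖χ‖⁻¹ • χ)) = ‖χ‖⁻¹ * cnorm1 (psiH Ψ χ)
        rw [psiH_smul', cnorm1_smul', abs_of_pos (inv_pos.mpr hn)]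
      have h1 : c ≤ ‖χ‖⁻¹ * f χ := by rw [← h2]; exact hx₀min _ hmem
      calc c * ‖χ‖ ≤ (‖χ‖⁻¹ * f χ) * ‖χ‖ := by
            exact mul_le_mul_of_nonneg_right h1 (le_of_lt hn)
        _ = f χ := by field_simp
  -- the gradient bound
  set g := fderiv ℝ L 0 with hg
  refine ⟨‖g‖ / c, div_nonneg (norm_nonneg _) (le_of_lt hcpos), ⟨0, ⟨?_, ?_⟩⟩⟩
  · refine ⟨h0C, fun χ hχ => ?_⟩
    have h1 : fderiv ℝ L 0 χ ≤ L χ - L 0 := grad_ineq' L hLcv hLd χ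
    have h2 : -(g χ) ≤ ‖g‖ * ‖χ‖ := by
      calc -(g χ) ≤ |g χ| := neg_le_abs _
        _ = ‖g χ‖ := (Real.norm_eq_abs _).symm
        _ ≤ ‖g‖ * ‖χ‖ := g.le_opNorm χ
    have h3 : ‖g‖ * ‖χ‖ ≤ (‖g‖ / c) * f χ := by
      have := mul_le_mul_of_nonneg_left (hlow χ) (div_nonneg (norm_nonneg g) (le_of_lt hcpos))
      calc ‖g‖ * ‖χ‖ = (‖g‖ / c) * (c * ‖χ‖) := by field_simp
        _ ≤ (‖g‖ / c) * f χ := this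
    have : L 0 ≤ L χ + (‖g‖ / c) * f χ := by
      have : L 0 - L χ ≤ -(g χ) := by linarith [h1]
      linarith
    simpa [hf0] using this
  · exact ⟨h0C, fun χ hχ => by rw [hf0]; exact cnorm1_nonneg' (psiH Ψ χ)⟩
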